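/- Define φ(t) = (t + (ln(2π) - γ)/2)·e^{-t} + e^t·S(e^{-2t}) + 3t/(2·sinh t) (with value (ln(2π)-γ)/2 + S(1) + 3/2 at t = 0). Then φ(t)·e^{t}/(4t) → 1 as t → +∞; i.e., φ(t) ~ 4t e^{-t} as t → ∞. -/

import Mathlib

open Real Filter

open Set Topology

/-- If `F 0 = 0` and `F` has nonneg derivative on `[0,∞)`, then `F u ≥ 0` for `u ≥ 0`. -/
lemma aux_nonneg {F F' : ℝ → ℝ} (hF : ∀ v : ℝ, 0 ≤ v → HasDerivAt F (F' v) v)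
    (hF' : ∀ v : ℝ, 0 ≤ v → 0 ≤ F' v) (h0 : F 0 = 0) {u : ℝ} (hu : 0 ≤ u) : 0 ≤ F u := by
  have hmono : MonotoneOn F (Ici (0:ℝ)) := by
    apply monotoneOn_of_deriv_nonneg (convex_Ici 0)
    · exact fun x hx => ((hF x hx).continuousAt).continuousWithinAt
    · intro x hx
      rw [interior_Ici] at hx
      exact ((hF x (le_of_lt hx)).differentiableAt).differentiableWithinAt
    · intro x hx
      rw [interior_Ici] at hx
      rw [(hF x (le_of_lt hx)).deriv]
      exact hF' x (le_of_lt hx)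
  have := hmono (self_mem_Ici) (mem_Ici.2 hu) hu
  rwa [h0] at this

lemma log_one_add_le {u : ℝ} (hu : 0 ≤ u) : Real.log (1 + u) ≤ u := by
  have := Real.log_le_sub_one_of_pos (by linarith : (0:ℝ) < 1 + u)
  linarith

lemma le_log_one_add {u : ℝ} (hu : 0 ≤ u) : u - u^2/2 ≤ Real.log (1 + u) := by
  have h := aux_nonneg (F := fun v => Real.log (1+v) - (v - v^2/2))
    (F' := fun v => 1/(1+v) - (1 - v)) ?_ ?_ (by norm_num) hu
  · linarith
  · intro v hv
    have h1 : HasDerivAt (fun w : ℝ => Real.log (1+w)) (1/(1+v)) v := by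
      have : HasDerivAt (fun w : ℝ => 1 + w) 1 v := by simpa using (hasDerivAt_id v).const_add 1
      simpa using this.log (by linarith)
    have h2 : HasDerivAt (fun w : ℝ => w - w^2/2) (1 - v) v := by
      have := ((hasDerivAt_id v).sub (((hasDerivAt_pow 2 v)).div_const 2))
      exact this.congr_deriv (by push_cast; ring)
    exact h1.sub h2
  · intro v hv
    have hv1 : (0:ℝ) < 1 + v := by linarith
    rw [sub_nonneg, le_div_iff₀ hv1]
    nlinarith

lemma log_one_add_le_cubic {u : ℝ} (hu : 0 ≤ u) :
    Real.log (1 + u) ≤ u - u^2/2 + u^3/3 := by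
  have h := aux_nonneg (F := fun v => (v - v^2/2 + v^3/3) - Real.log (1+v))
    (F' := fun v => (1 - v + v^2) - 1/(1+v)) ?_ ?_ (by norm_num) hu
  · linarith
  · intro v hv
    have h1 : HasDerivAt (fun w : ℝ => Real.log (1+w)) (1/(1+v)) v := by
      have : HasDerivAt (fun w : ℝ => 1 + w) 1 v := by simpa using (hasDerivAt_id v).const_add 1
      simpa using this.log (by linarith)
    have h2 : HasDerivAt (fun w : ℝ => w - w^2/2 + w^3/3) (1 - v + v^2) v := by
      have := (((hasDerivAt_id v).sub (((hasDerivAt_pow 2 v)).div_const 2)).add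
        (((hasDerivAt_pow 3 v)).div_const 3))
      exact this.congr_deriv (by push_cast; ring)
    exact h2.sub h1
  · intro v hv
    have hv1 : (0:ℝ) < 1 + v := by linarith
    rw [sub_nonneg, div_le_iff₀ hv1]
    nlinarith

/-- The digamma function `ψ(x) = Γ'(x)/Γ(x) = d(log Γ)/dx`. -/
noncomputable def digamma (x : ℝ) : ℝ := deriv (fun y : ℝ => Real.log (Real.Gamma y)) x


lemma digamma_hasSum {x : ℝ} (hx : 0 < x) :
    HasSum (fun k : ℕ => (1/(x+k) - (Real.log (x+(k:ℝ)+1) - Real.log (x+k))))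
      (Real.log x - digamma x) := by
  set f : ℝ → ℝ := fun y : ℝ => Real.log (Real.Gamma y) with hf
  have hc : ConvexOn ℝ (Ioi 0) f := Real.convexOn_log_Gamma
  have hder : ∀ {y : ℝ}, 0 < y → DifferentiableAt ℝ f y := by
    intro y hy
    refine ((Real.differentiableAt_Gamma ?_).log (Real.Gamma_ne_zero ?_)) <;>
      exact fun m => ((neg_nonpos.mpr (Nat.cast_nonneg m)).trans_lt hy).ne'
  have h_rec : ∀ y : ℝ, 0 < y → f (y + 1) = f y + Real.log y := by
    intro y hy
    simp only [hf, Real.Gamma_add_one hy.ne',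
      Real.log_mul hy.ne' (Real.Gamma_pos_of_pos hy).ne', add_comm]
  have hder_rec : ∀ y : ℝ, 0 < y → deriv f (y + 1) = deriv f y + 1 / y := by
    intro y hy
    rw [← deriv_comp_add_const, one_div, ← Real.deriv_log,
      ← deriv_add (hder hy) (Real.differentiableAt_log hy.ne')]
    apply Filter.EventuallyEq.deriv_eq
    filter_upwards [eventually_gt_nhds hy] using h_rec
  have hder_nat : ∀ n : ℕ, deriv f (x + n) =
      deriv f x + ∑ k ∈ Finset.range n, 1 / (x + k) := by
    intro n
    induction n with
    | zero => simp
    | succ n ih =>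
      have : (x + (n+1:ℕ) : ℝ) = (x + n) + 1 := by push_cast; ring
      rw [this, hder_rec _ (by positivity), ih, Finset.sum_range_succ]
      ring
  -- slope bounds on deriv f
  have hlow : ∀ y : ℝ, 0 < y → Real.log y ≤ deriv f (y + 1) := by
    intro y hy
    have := hc.slope_le_deriv (mem_Ioi.2 hy) (mem_Ioi.2 (by linarith : (0:ℝ) < y + 1))
      (by linarith) (hder (by linarith))
    rwa [slope_def_field, h_rec y hy, add_sub_cancel_left, add_sub_cancel_left, div_one] at this
  have hup : ∀ y : ℝ, 0 < y → deriv f (y + 1) ≤ Real.log (y + 1) := by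
    intro y hy
    have := hc.deriv_le_slope (mem_Ioi.2 (by linarith : (0:ℝ) < y + 1))
      (mem_Ioi.2 (by linarith : (0:ℝ) < y + 2)) (by linarith) (hder (by linarith))
    have h2 : (y:ℝ) + 2 = (y + 1) + 1 := by ring
    rw [slope_def_field, h2, h_rec (y+1) (by linarith), add_sub_cancel_left] at this
    simpa using this
  set c : ℕ → ℝ := fun n => Real.log (x + n) - ∑ k ∈ Finset.range n, 1 / (x + k) with hcdef
  have hcx : Tendsto c atTop (𝓝 (deriv f x)) := by
    rw [show (deriv f x) = (deriv f x + 0) by ring]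
    have key : ∀ m : ℕ, c (m + 1) - deriv f x ∈ Icc (0:ℝ) (1/(x+m)) := by
      intro m
      have hxm : (0:ℝ) < x + m := by positivity
      have e1 : c (m+1) - deriv f x = Real.log (x + (m+1:ℕ)) - deriv f (x + (m+1:ℕ)) := by
        rw [hcdef]; simp only [hder_nat (m+1)]; ring
      have e2 : (x + (m+1:ℕ) : ℝ) = (x + m) + 1 := by push_cast; ring
      rw [e1, e2]
      constructor
      · have := hup (x + m) hxm; linarith
      · have h3 := hlow (x + m) hxm
        have h4 : Real.log ((x+m) + 1) - Real.log (x+m) ≤ 1/(x+m) := by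
          rw [← Real.log_div (by positivity) (by positivity)]
          have := Real.log_le_sub_one_of_pos (show (0:ℝ) < ((x+m)+1)/(x+m) by positivity)
          have e : ((x+m)+1)/(x+m) - 1 = 1/(x+m) := by field_simp; ring
          linarith
        linarith
    have h0 : Tendsto (fun m : ℕ => c (m+1) - deriv f x) atTop (𝓝 0) := by
      apply squeeze_zero (fun m => (key m).1) (fun m => (key m).2)
      simp only [one_div]
      apply Tendsto.comp tendsto_inv_atTop_zero
      simpa using tendsto_atTop_add_const_left atTop x tendsto_natCast_atTop_atTop
    have := h0.add_const (deriv f x)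
    simp only [sub_add_cancel, zero_add] at this
    rw [show (deriv f x + 0) = deriv f x by ring]
    exact (tendsto_add_atTop_iff_nat 1).mp this
  -- partial sums
  have hpart : ∀ n : ℕ, ∑ k ∈ Finset.range n,
      (1/(x+k) - (Real.log (x+(k:ℝ)+1) - Real.log (x+k))) = Real.log x - c n := by
    intro n
    rw [Finset.sum_sub_distrib]
    have := Finset.sum_range_sub (f := fun k : ℕ => Real.log (x + k)) n
    have e : ∀ k : ℕ, Real.log (x + ((k+1:ℕ):ℝ)) = Real.log (x + (k:ℝ) + 1) := by
      intro k; push_cast; ring_nf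
    simp only [e] at this
    rw [this, hcdef]
    simp only [Nat.cast_zero, add_zero]
    ring
  rw [hasSum_iff_tendsto_nat_of_nonneg]
  · simp only [hpart]
    exact (tendsto_const_nhds.sub hcx)
  · intro k
    have hxk : (0:ℝ) < x + k := by positivity
    have h4 : Real.log (x+(k:ℝ)+1) - Real.log (x+k) ≤ 1/(x+k) := by
      rw [← Real.log_div (by positivity) (by positivity)]
      have := Real.log_le_sub_one_of_pos (show (0:ℝ) < (x+(k:ℝ)+1)/(x+k) by positivity)
      have e : (x+(k:ℝ)+1)/(x+k) - 1 = 1/(x+k) := by field_simp; ring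
      linarith
    linarith

lemma hasSum_telescope {x : ℝ} (hx : 0 < x) :
    HasSum (fun k : ℕ => 1/(x+(k:ℝ)) - 1/(x+(k:ℝ)+1)) (1/x) := by
  rw [hasSum_iff_tendsto_nat_of_nonneg]
  · have e : ∀ n : ℕ, ∑ k ∈ Finset.range n, (1/(x+(k:ℝ)) - 1/(x+(k:ℝ)+1))
        = 1/x - 1/(x+(n:ℝ)) := by
      intro n
      have h := Finset.sum_range_sub' (f := fun k : ℕ => 1/(x+(k:ℝ))) n
      have e2 : ∀ k : ℕ, 1/(x + ((k+1:ℕ):ℝ)) = 1/(x + (k:ℝ) + 1) := by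
        intro k; push_cast; ring_nf
      simp only [e2] at h
      rw [h]
      norm_num
    simp only [e]
    have hzero : Tendsto (fun n : ℕ => 1/(x+(n:ℝ))) atTop (𝓝 0) := by
      simp only [one_div]
      apply Tendsto.comp tendsto_inv_atTop_zero
      simpa using tendsto_atTop_add_const_left atTop x tendsto_natCast_atTop_atTop
    simpa using tendsto_const_nhds.sub hzero
  · intro k
    have h1 : (0:ℝ) < x + k := by positivity
    have := one_div_le_one_div_of_le h1 (by linarith : x + (k:ℝ) ≤ x + k + 1)
    linarith

lemma pointwise_bound {x : ℝ} (hx : 1 ≤ x) (k : ℕ) :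
    |(1/(x+(k:ℝ)) - (Real.log (x+(k:ℝ)+1) - Real.log (x+(k:ℝ))))
      - 1/2 * (1/(x+(k:ℝ)) - 1/(x+(k:ℝ)+1))|
    ≤ 2/x * (1/(x+(k:ℝ)) - 1/(x+(k:ℝ)+1)) := by
  set y := x + (k:ℝ) with hy
  have hy1 : 1 ≤ y := by have : (0:ℝ) ≤ k := Nat.cast_nonneg k; linarith
  have hy0 : 0 < y := by linarith
  have hxy : x ≤ y := by have : (0:ℝ) ≤ k := Nat.cast_nonneg k; linarith
  have hx0 : 0 < x := by linarith
  have hlog : Real.log (y+1) - Real.log y = Real.log (1 + 1/y) := by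
    rw [← Real.log_div (by positivity) hy0.ne']
    congr 1
    field_simp
  have hu : (0:ℝ) ≤ 1/y := by positivity
  have hA := le_log_one_add hu
  have hB := log_one_add_le_cubic hu
  have hpq : 1/y - 1/(y+1) = (1/y) * (1/(y+1)) := by
    rw [div_sub_div _ _ hy0.ne' (by positivity : (y+1) ≠ 0)]
    rw [div_mul_div_comm]
    norm_num
  have hqp : 1/(y+1) ≤ 1/y := by
    apply one_div_le_one_div_of_le hy0; linarith
  have hkey1 : 1/y ≤ 4 * (1/x) := by
    rw [show (4:ℝ) * (1/x) = 4/x by ring, div_le_div_iff₀ hy0 hx0]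
    nlinarith
  have hkey2 : (1/y)^2 ≤ 6 * (1/(y+1)) * (1/x) := by
    rw [show (6:ℝ) * (1/(y+1)) * (1/x) = 6 / ((y+1)*x) by field_simp]
    rw [div_pow, one_pow, div_le_div_iff₀ (by positivity) (by positivity)]
    nlinarith
  have hp : (0:ℝ) < 1/y := by positivity
  have hq : (0:ℝ) < 1/(y+1) := by positivity
  have hr : (0:ℝ) < 1/x := by positivity
  rw [hlog, hpq, abs_le]
  have hint1 := mul_le_mul_of_nonneg_left hkey2 hp.le
  have hint2 := mul_le_mul_of_nonneg_left hkey1 (mul_nonneg hp.le hq.le)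
  have hint3 := mul_nonneg (mul_nonneg hp.le hp.le) hq.le
  have e3 : 2/x = 2 * (1/x) := by ring
  rw [e3]
  constructor
  · nlinarith [hB, hint1, hint3]
  · nlinarith [hA, hint2, hint3]

lemma abs_digamma_bound {x : ℝ} (hx : 1 ≤ x) :
    |Real.log x - digamma x - 1/(2*x)| ≤ 2/x^2 := by
  have hx0 : 0 < x := by linarith
  have htel := hasSum_telescope hx0
  have hg := digamma_hasSum hx0
  have hsum := hg.sub (htel.mul_left (1/2))
  have hb := htel.mul_left (2/x)
  have hup := hasSum_le (fun k => (abs_le.1 (pointwise_bound hx k)).2) hsum hb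
  have hlo := hasSum_le (fun k => (abs_le.1 (pointwise_bound hx k)).1) hb.neg hsum
  have e1 : 2/x * (1/x) = 2/x^2 := by rw [pow_two]; field_simp
  have e2 : (1:ℝ)/2 * (1/x) = 1/(2*x) := by ring
  rw [e1] at hup hlo
  rw [e2] at hup hlo
  rw [abs_le]
  constructor <;> linarith

/-- `S(a) = Σ_{n=1}^∞ [ln(n/a) - a/(2n) - ψ(n/a)]`. -/
noncomputable def S (a : ℝ) : ℝ :=
  ∑' n : ℕ+, (Real.log ((n : ℝ) / a) - a / (2 * (n : ℝ)) - digamma ((n : ℝ) / a))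


noncomputable def Kconst : ℝ := ∑' n : ℕ+, 1/((n:ℕ):ℝ)^2

lemma summable_sq : Summable (fun n : ℕ+ => 1/(((n:ℕ)):ℝ)^2) := by
  have h : Summable (fun n : ℕ => 1/((n:ℝ))^2) := by
    simpa using Real.summable_one_div_nat_pow.mpr one_lt_two
  exact h.comp_injective PNat.coe_injective

lemma term_bound {a : ℝ} (ha0 : 0 < a) (ha1 : a ≤ 1) (n : ℕ+) :
    |Real.log ((n : ℝ) / a) - a / (2 * (n : ℝ)) - digamma ((n : ℝ) / a)|
      ≤ 2 * a^2 * (1/((n:ℕ):ℝ)^2) := by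
  have hn1 : (1:ℝ) ≤ (n:ℝ) := by exact_mod_cast n.one_le
  have hn0 : (0:ℝ) < (n:ℝ) := by linarith
  set x : ℝ := (n:ℝ)/a with hxdef
  have hx1 : 1 ≤ x := by
    rw [hxdef, le_div_iff₀ ha0]
    linarith
  have hx0 : 0 < x := by linarith
  have e1 : a / (2 * (n:ℝ)) = 1/(2*x) := by
    rw [hxdef]
    field_simp
  have e2 : 2/x^2 = 2 * a^2 * (1/((n:ℕ):ℝ)^2) := by
    rw [hxdef]
    have : ((n:ℕ):ℝ) = (n:ℝ) := rfl
    rw [this]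
    field_simp
  rw [e1, ← e2]
  have h := abs_digamma_bound hx1
  rw [show Real.log x - digamma x - 1/(2*x) = Real.log x - 1/(2*x) - digamma x by ring] at h
  exact h

lemma abs_S_le {a : ℝ} (ha0 : 0 < a) (ha1 : a ≤ 1) : |S a| ≤ 2 * Kconst * a^2 := by
  have hb : Summable (fun n : ℕ+ => 2 * a^2 * (1/((n:ℕ):ℝ)^2)) := summable_sq.mul_left _
  have hs : Summable (fun n : ℕ+ =>
      ‖Real.log ((n : ℝ) / a) - a / (2 * (n : ℝ)) - digamma ((n : ℝ) / a)‖) := by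
    apply hb.of_nonneg_of_le (fun n => norm_nonneg _)
    intro n
    exact term_bound ha0 ha1 n
  calc |S a| ≤ ∑' n : ℕ+,
      ‖Real.log ((n : ℝ) / a) - a / (2 * (n : ℝ)) - digamma ((n : ℝ) / a)‖ :=
        norm_tsum_le_tsum_norm hs
    _ ≤ ∑' n : ℕ+, 2 * a^2 * (1/((n:ℕ):ℝ)^2) :=
        Summable.tsum_le_tsum (fun n => term_bound ha0 ha1 n) hs hb
    _ = 2 * a^2 * Kconst := by rw [tsum_mul_left]; rfl
    _ = 2 * Kconst * a^2 := by ring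

/-- `φ(t) = (t + (ln(2π)-γ)/2) e^{-t} + e^t S(e^{-2t}) + 3t/(2 sinh t)`,
with the last term interpreted as `3/2` at `t = 0`. -/
noncomputable def phi (t : ℝ) : ℝ :=
  (t + (Real.log (2 * π) - Real.eulerMascheroniConstant) / 2) * Real.exp (-t)
    + Real.exp t * S (Real.exp (-2 * t))
    + (if t = 0 then 3 / 2 else 3 * t / (2 * Real.sinh t))


lemma Kconst_nonneg : 0 ≤ Kconst := tsum_nonneg (fun n => by positivity)

theorem phi_asymptotic :
    Tendsto (fun t : ℝ => phi t * Real.exp t / (4 * t)) atTop (nhds 1) := by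
  set c : ℝ := (Real.log (2 * π) - Real.eulerMascheroniConstant) / 2 with hc
  have hexp : Tendsto (fun t : ℝ => Real.exp (-2*t)) atTop (𝓝 0) := by
    apply Real.tendsto_exp_atBot.comp
    have h2t : Tendsto (fun t : ℝ => 2*t) atTop atTop :=
      tendsto_id.const_mul_atTop two_pos
    have := tendsto_neg_atTop_atBot.comp h2t
    convert this using 1
    ext t
    simp [Function.comp]
  -- the three pieces
  have hA : Tendsto (fun t : ℝ => 1/4 + c/4 * t⁻¹) atTop (𝓝 (1/4)) := by
    have h1 : Tendsto (fun t : ℝ => c/4 * t⁻¹) atTop (𝓝 (c/4 * 0)) :=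
      tendsto_inv_atTop_zero.const_mul (c/4)
    rw [mul_zero] at h1
    have h2 := (tendsto_const_nhds (x := (1/4:ℝ)) (f := atTop)).add h1
    rw [add_zero] at h2
    exact h2
  have hC : Tendsto (fun t : ℝ => 3/(4*(1 - Real.exp (-2*t)))) atTop (𝓝 (3/4)) := by
    have hden : Tendsto (fun t : ℝ => 4*(1 - Real.exp (-2*t))) atTop (𝓝 (4*(1-0))) :=
      ((tendsto_const_nhds (x := (1:ℝ)) (f := atTop)).sub hexp).const_mul 4
    rw [show (4:ℝ)*(1-0) = 4 by norm_num] at hden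
    exact (tendsto_const_nhds (x := (3:ℝ)) (f := atTop)).div hden (by norm_num : (4:ℝ) ≠ 0)
  have hB : Tendsto (fun t : ℝ => Real.exp t * S (Real.exp (-2*t)) * Real.exp t / (4*t))
      atTop (𝓝 0) := by
    apply squeeze_zero_norm' (a := fun t : ℝ => 2 * Kconst * Real.exp (-2*t))
    · filter_upwards [eventually_ge_atTop (1:ℝ)] with t ht
      have ht0 : 0 < t := by linarith
      set a : ℝ := Real.exp (-2*t) with ha
      have ha0 : 0 < a := Real.exp_pos _
      have ha1 : a ≤ 1 := Real.exp_le_one_iff.mpr (by linarith)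
      have hS := abs_S_le ha0 ha1
      rw [Real.norm_eq_abs]
      have habs : |Real.exp t * S a * Real.exp t / (4*t)|
          = Real.exp t * Real.exp t * |S a| / (4*t) := by
        rw [abs_div, abs_mul, abs_mul, abs_of_pos (Real.exp_pos t),
          abs_of_pos (by positivity : (0:ℝ) < 4*t)]
        ring
      rw [habs]
      have key : Real.exp t * Real.exp t * (2 * Kconst * a^2) = 2 * Kconst * a := by
        rw [ha]
        rw [← Real.exp_add, pow_two, ← Real.exp_add, mul_comm (Real.exp (t+t)),
          mul_assoc, ← Real.exp_add]
        ring_nf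
      calc Real.exp t * Real.exp t * |S a| / (4*t)
          ≤ Real.exp t * Real.exp t * (2 * Kconst * a^2) / (4*t) := by
            rw [div_le_div_iff_of_pos_right (by linarith : (0:ℝ) < 4*t)]
            exact mul_le_mul_of_nonneg_left hS (by positivity)
        _ = 2 * Kconst * a / (4*t) := by rw [key]
        _ ≤ 2 * Kconst * a := by
            apply div_le_self (mul_nonneg (by linarith [Kconst_nonneg]) ha0.le)
            linarith
    · have h2 := hexp.const_mul (2 * Kconst)
      rw [mul_zero] at h2
      exact h2
  have hev : ∀ᶠ t : ℝ in atTop, (1/4 + c/4 * t⁻¹)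
      + Real.exp t * S (Real.exp (-2*t)) * Real.exp t / (4*t)
      + 3/(4*(1 - Real.exp (-2*t)))
      = phi t * Real.exp t / (4 * t) := by
    filter_upwards [eventually_ge_atTop (1:ℝ)] with t ht
    have ht0 : (0:ℝ) < t := by linarith
    have hne : t ≠ 0 := ht0.ne'
    have hE : Real.exp t ≠ 0 := (Real.exp_pos t).ne'
    have e2t : Real.exp (-2*t) = (Real.exp t)⁻¹ * (Real.exp t)⁻¹ := by
      rw [← Real.exp_neg, ← Real.exp_add]; ring_nf
    have e1t : Real.exp (-t) = (Real.exp t)⁻¹ := Real.exp_neg t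
    have hsinh : Real.sinh t = (Real.exp t - (Real.exp t)⁻¹)/2 := by
      rw [Real.sinh_eq, e1t]
    have hsp : 0 < Real.sinh t := by rwa [Real.sinh_pos_iff]
    have hsne : Real.exp t - (Real.exp t)⁻¹ ≠ 0 := by
      rw [hsinh] at hsp; intro h; rw [h] at hsp; norm_num at hsp
    have hdne : 1 - (Real.exp t)⁻¹ * (Real.exp t)⁻¹ ≠ 0 := by
      have h1 : Real.exp (-2*t) < 1 := by
        rw [Real.exp_lt_one_iff]; linarith
      rw [e2t] at h1; intro h
      have : (Real.exp t)⁻¹ * (Real.exp t)⁻¹ = 1 := by linarith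
      rw [this] at h1; norm_num at h1
    have hE1 : 1 < Real.exp t := by simpa using Real.exp_lt_exp.mpr ht0
    have hne4 : (-4 + Real.exp t ^ 2 * 4) ≠ 0 := by nlinarith
    have hne2 : (-2 + Real.exp t ^ 2 * 2) ≠ 0 := by nlinarith
    rw [phi, if_neg hne, hsinh, e2t, e1t, ← hc]
    field_simp
  rw [show (1:ℝ) = 1/4 + 0 + 3/4 by norm_num]
  exact Tendsto.congr' hev ((hA.add hB).add hC)
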